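/- For real numbers m ∉ {0,1} and c ≠ 0, the Gaussian curvature K of the surface x_{m,c}(r,θ) = (r cos θ, r sin θ, c r^m cos mθ) is given at every point (r,θ) ∈ (0,∞) × ℝ by K = − c² m² (m−1)² r^{2m−4} / (1 + c² m² r^{2m−2})². In particular K depends only on r (so K takes the same value at (r,θ₁) and (r,θ₂) for all θ₁, θ₂), i.e. x_{m,c} has concentric K-contours with respect to the xy-plane. -/

import Mathlib

noncomputable section

/-- Cross product on ℝ³ represented as `ℝ × ℝ × ℝ`. -/
def cross3 (u v : ℝ × ℝ × ℝ) : ℝ × ℝ × ℝ :=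
  (u.2.1 * v.2.2 - u.2.2 * v.2.1,
   u.2.2 * v.1 - u.1 * v.2.2,
   u.1 * v.2.1 - u.2.1 * v.1)

/-- Dot product on ℝ³. -/
def dot3 (u v : ℝ × ℝ × ℝ) : ℝ :=
  u.1 * v.1 + u.2.1 * v.2.1 + u.2.2 * v.2.2

/-- Euclidean norm on ℝ³. -/
def norm3 (u : ℝ × ℝ × ℝ) : ℝ := Real.sqrt (dot3 u u)

theorem d_r (c m t : ℝ) {s : ℝ} (hs : 0 < s) :
    deriv (fun s' : ℝ => (s' * Real.cos t, s' * Real.sin t, c * s' ^ m * Real.cos (m * t))) s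
      = (Real.cos t, Real.sin t, c * (m * s ^ (m - 1)) * Real.cos (m * t)) := by
  have h1 : HasDerivAt (fun s' : ℝ => s' * Real.cos t) (Real.cos t) s := by
    simpa using (hasDerivAt_id s).mul_const (Real.cos t)
  have h2 : HasDerivAt (fun s' : ℝ => s' * Real.sin t) (Real.sin t) s := by
    simpa using (hasDerivAt_id s).mul_const (Real.sin t)
  have h3 : HasDerivAt (fun s' : ℝ => c * s' ^ m * Real.cos (m * t))
      (c * (m * s ^ (m - 1)) * Real.cos (m * t)) s :=
    ((Real.hasDerivAt_rpow_const (Or.inl hs.ne')).const_mul c).mul_const _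
  exact (HasDerivAt.prodMk h1 (HasDerivAt.prodMk h2 h3)).deriv

theorem d_t (c m s : ℝ) (t : ℝ) :
    deriv (fun t' : ℝ => (s * Real.cos t', s * Real.sin t', c * s ^ m * Real.cos (m * t'))) t
      = (s * (-Real.sin t), s * Real.cos t, c * s ^ m * (-Real.sin (m * t) * m)) := by
  have hmt : HasDerivAt (fun t' : ℝ => m * t') m t := by
    simpa using (hasDerivAt_id t).const_mul m
  have h1 : HasDerivAt (fun t' : ℝ => s * Real.cos t') (s * (-Real.sin t)) t :=
    (Real.hasDerivAt_cos t).const_mul s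
  have h2 : HasDerivAt (fun t' : ℝ => s * Real.sin t') (s * Real.cos t) t :=
    (Real.hasDerivAt_sin t).const_mul s
  have h3 : HasDerivAt (fun t' : ℝ => c * s ^ m * Real.cos (m * t'))
      (c * s ^ m * (-Real.sin (m * t) * m)) t :=
    (((Real.hasDerivAt_cos (m * t)).comp t hmt)).const_mul (c * s ^ m)
  exact (HasDerivAt.prodMk h1 (HasDerivAt.prodMk h2 h3)).deriv

theorem d_rr (c m t : ℝ) {s : ℝ} (hs : 0 < s) :
    deriv (fun s' : ℝ =>
        deriv (fun s'' : ℝ => (s'' * Real.cos t, s'' * Real.sin t, c * s'' ^ m * Real.cos (m * t))) s') s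
      = ((0 : ℝ), (0 : ℝ), c * (m * ((m - 1) * s ^ (m - 2))) * Real.cos (m * t)) := by
  have hev : (fun s' : ℝ =>
      deriv (fun s'' : ℝ => (s'' * Real.cos t, s'' * Real.sin t, c * s'' ^ m * Real.cos (m * t))) s')
      =ᶠ[nhds s] fun s' : ℝ =>
        (Real.cos t, Real.sin t, c * (m * s' ^ (m - 1)) * Real.cos (m * t)) := by
    filter_upwards [eventually_gt_nhds hs] with s' hs' using d_r c m t hs'
  rw [hev.deriv_eq]
  have h1 : HasDerivAt (fun _ : ℝ => Real.cos t) (0 : ℝ) s := hasDerivAt_const s _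
  have h2 : HasDerivAt (fun _ : ℝ => Real.sin t) (0 : ℝ) s := hasDerivAt_const s _
  have h3 : HasDerivAt (fun s' : ℝ => c * (m * s' ^ (m - 1)) * Real.cos (m * t))
      (c * (m * ((m - 1) * s ^ (m - 2))) * Real.cos (m * t)) s := by
    have := (((Real.hasDerivAt_rpow_const (p := m - 1) (Or.inl hs.ne')).const_mul m).const_mul c).mul_const (Real.cos (m * t))
    have he : m - 1 - 1 = m - 2 := by ring
    simpa [he, mul_assoc, mul_comm, mul_left_comm] using this
  exact (HasDerivAt.prodMk h1 (HasDerivAt.prodMk h2 h3)).deriv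

theorem d_rt (c m : ℝ) {s : ℝ} (hs : 0 < s) (t : ℝ) :
    deriv (fun t' : ℝ =>
        deriv (fun s' : ℝ => (s' * Real.cos t', s' * Real.sin t', c * s' ^ m * Real.cos (m * t'))) s) t
      = (-Real.sin t, Real.cos t, c * (m * s ^ (m - 1)) * (-Real.sin (m * t) * m)) := by
  have hfe : (fun t' : ℝ =>
      deriv (fun s' : ℝ => (s' * Real.cos t', s' * Real.sin t', c * s' ^ m * Real.cos (m * t'))) s)
      = fun t' : ℝ => (Real.cos t', Real.sin t', c * (m * s ^ (m - 1)) * Real.cos (m * t')) :=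
    funext fun t' => d_r c m t' hs
  rw [hfe]
  have hmt : HasDerivAt (fun t' : ℝ => m * t') m t := by
    simpa using (hasDerivAt_id t).const_mul m
  have h3 : HasDerivAt (fun t' : ℝ => c * (m * s ^ (m - 1)) * Real.cos (m * t'))
      (c * (m * s ^ (m - 1)) * (-Real.sin (m * t) * m)) t :=
    ((Real.hasDerivAt_cos (m * t)).comp t hmt).const_mul _
  exact (HasDerivAt.prodMk (Real.hasDerivAt_cos t) (HasDerivAt.prodMk (Real.hasDerivAt_sin t) h3)).deriv

theorem d_tt (c m s t : ℝ) :
    deriv (fun t' : ℝ =>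
        deriv (fun t'' : ℝ => (s * Real.cos t'', s * Real.sin t'', c * s ^ m * Real.cos (m * t''))) t') t
      = (s * -Real.cos t, s * -Real.sin t, c * s ^ m * (-(Real.cos (m * t) * m) * m)) := by
  have hfe : (fun t' : ℝ =>
      deriv (fun t'' : ℝ => (s * Real.cos t'', s * Real.sin t'', c * s ^ m * Real.cos (m * t''))) t')
      = fun t' : ℝ => (s * (-Real.sin t'), s * Real.cos t', c * s ^ m * (-Real.sin (m * t') * m)) :=
    funext fun t' => d_t c m s t'
  rw [hfe]
  have hmt : HasDerivAt (fun t' : ℝ => m * t') m t := by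
    simpa using (hasDerivAt_id t).const_mul m
  have h1 : HasDerivAt (fun t' : ℝ => s * (-Real.sin t')) (s * -Real.cos t) t :=
    ((Real.hasDerivAt_sin t).neg).const_mul s
  have h2 : HasDerivAt (fun t' : ℝ => s * Real.cos t') (s * -Real.sin t) t := by
    simpa using (Real.hasDerivAt_cos t).const_mul s
  have h3 : HasDerivAt (fun t' : ℝ => c * s ^ m * (-Real.sin (m * t') * m))
      (c * s ^ m * (-(Real.cos (m * t) * m) * m)) t :=
    ((((Real.hasDerivAt_sin (m * t)).comp t hmt).neg).mul_const m).const_mul (c * s ^ m)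
  exact (HasDerivAt.prodMk h1 (HasDerivAt.prodMk h2 h3)).deriv

theorem dot3_smul (a : ℝ) (u w : ℝ × ℝ × ℝ) : dot3 u (a • w) = a * dot3 u w := by
  simp only [dot3, Prod.smul_fst, Prod.smul_snd, smul_eq_mul]; ring

theorem hEG (c m r v ct st cm sm : ℝ)
    (h1 : ct^2 + st^2 = 1) (h2 : cm^2 + sm^2 = 1) :
    dot3 (ct, st, c * (m * (v * r)) * cm) (ct, st, c * (m * (v * r)) * cm) *
      dot3 (r * (-st), r * ct, c * (v * r * r) * (-sm * m)) (r * (-st), r * ct, c * (v * r * r) * (-sm * m)) -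
      dot3 (ct, st, c * (m * (v * r)) * cm) (r * (-st), r * ct, c * (v * r * r) * (-sm * m)) ^ 2
      = r^2 + c^2*m^2*v^2*r^4 := by
  simp only [dot3]
  linear_combination (c^2*m^2*v^2*r^4*(sm^2+cm^2) + r^2*(ct^2+st^2+1)) * h1 + c^2*m^2*v^2*r^4 * h2

theorem heg (c m r v ct st cm sm : ℝ) (hr : 0 < r)
    (h1 : ct^2 + st^2 = 1) (h2 : cm^2 + sm^2 = 1) :
    (dot3 ((0:ℝ), (0:ℝ), c * (m * ((m - 1) * v)) * cm)
        ((norm3 (cross3 (ct, st, c * (m * (v * r)) * cm) (r * (-st), r * ct, c * (v * r * r) * (-sm * m))))⁻¹ •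
          cross3 (ct, st, c * (m * (v * r)) * cm) (r * (-st), r * ct, c * (v * r * r) * (-sm * m))) *
      dot3 (r * -ct, r * -st, c * (v * r * r) * (-(cm * m) * m))
        ((norm3 (cross3 (ct, st, c * (m * (v * r)) * cm) (r * (-st), r * ct, c * (v * r * r) * (-sm * m))))⁻¹ •
          cross3 (ct, st, c * (m * (v * r)) * cm) (r * (-st), r * ct, c * (v * r * r) * (-sm * m))) -
      dot3 (-st, ct, c * (m * (v * r)) * (-sm * m))
        ((norm3 (cross3 (ct, st, c * (m * (v * r)) * cm) (r * (-st), r * ct, c * (v * r * r) * (-sm * m))))⁻¹ •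
          cross3 (ct, st, c * (m * (v * r)) * cm) (r * (-st), r * ct, c * (v * r * r) * (-sm * m))) ^ 2)
      = -(c^2*m^2*(m-1)^2*v^2*r^4) / (r^2 + c^2*m^2*v^2*r^4) := by
  have hX : (0:ℝ) < r^2 + c^2*m^2*v^2*r^4 := by positivity
  have hQ : dot3 (cross3 (ct, st, c * (m * (v * r)) * cm) (r * (-st), r * ct, c * (v * r * r) * (-sm * m)))
         (cross3 (ct, st, c * (m * (v * r)) * cm) (r * (-st), r * ct, c * (v * r * r) * (-sm * m)))
      = r^2 + c^2*m^2*v^2*r^4 := by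
    simp only [cross3, dot3]
    linear_combination (c^2*m^2*v^2*r^4*(sm^2+cm^2) + r^2*(ct^2+st^2+1)) * h1 + c^2*m^2*v^2*r^4 * h2
  have hn : norm3 (cross3 (ct, st, c * (m * (v * r)) * cm) (r * (-st), r * ct, c * (v * r * r) * (-sm * m)))
      = Real.sqrt (r^2 + c^2*m^2*v^2*r^4) := by rw [norm3, hQ]
  rw [hn]
  set S := Real.sqrt (r^2 + c^2*m^2*v^2*r^4) with hSdef
  have hS2 : S ^ 2 = r^2 + c^2*m^2*v^2*r^4 := Real.sq_sqrt hX.le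
  have hSpos : 0 < S := Real.sqrt_pos.mpr hX
  rw [dot3_smul, dot3_smul, dot3_smul]
  rw [show ∀ A B C : ℝ, S⁻¹ * A * (S⁻¹ * B) - (S⁻¹ * C) ^ 2 = (A * B - C ^ 2) / S ^ 2 from
    fun A B C => by field_simp]
  rw [hS2]
  congr 1
  simp only [dot3, cross3]
  linear_combination (-(c^2*m^2*(m-1)^2*v^2*r^4)*(cm^2+sm^2)*(ct^2+st^2+1)) * h1 +
    (-(c^2*m^2*(m-1)^2*v^2*r^4)) * h2

theorem key (m c r θ : ℝ) (hr : 0 < r) :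
    (dot3 ((0:ℝ), (0:ℝ), c * (m * ((m - 1) * r ^ (m - 2))) * Real.cos (m * θ))
        ((norm3 (cross3 (Real.cos θ, Real.sin θ, c * (m * r ^ (m - 1)) * Real.cos (m * θ))
            (r * (-Real.sin θ), r * Real.cos θ, c * r ^ m * (-Real.sin (m * θ) * m))))⁻¹ •
          cross3 (Real.cos θ, Real.sin θ, c * (m * r ^ (m - 1)) * Real.cos (m * θ))
            (r * (-Real.sin θ), r * Real.cos θ, c * r ^ m * (-Real.sin (m * θ) * m))) *
      dot3 (r * -Real.cos θ, r * -Real.sin θ, c * r ^ m * (-(Real.cos (m * θ) * m) * m))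
        ((norm3 (cross3 (Real.cos θ, Real.sin θ, c * (m * r ^ (m - 1)) * Real.cos (m * θ))
            (r * (-Real.sin θ), r * Real.cos θ, c * r ^ m * (-Real.sin (m * θ) * m))))⁻¹ •
          cross3 (Real.cos θ, Real.sin θ, c * (m * r ^ (m - 1)) * Real.cos (m * θ))
            (r * (-Real.sin θ), r * Real.cos θ, c * r ^ m * (-Real.sin (m * θ) * m))) -
      dot3 (-Real.sin θ, Real.cos θ, c * (m * r ^ (m - 1)) * (-Real.sin (m * θ) * m))
        ((norm3 (cross3 (Real.cos θ, Real.sin θ, c * (m * r ^ (m - 1)) * Real.cos (m * θ))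
            (r * (-Real.sin θ), r * Real.cos θ, c * r ^ m * (-Real.sin (m * θ) * m))))⁻¹ •
          cross3 (Real.cos θ, Real.sin θ, c * (m * r ^ (m - 1)) * Real.cos (m * θ))
            (r * (-Real.sin θ), r * Real.cos θ, c * r ^ m * (-Real.sin (m * θ) * m))) ^ 2) /
    (dot3 (Real.cos θ, Real.sin θ, c * (m * r ^ (m - 1)) * Real.cos (m * θ))
        (Real.cos θ, Real.sin θ, c * (m * r ^ (m - 1)) * Real.cos (m * θ)) *
      dot3 (r * (-Real.sin θ), r * Real.cos θ, c * r ^ m * (-Real.sin (m * θ) * m))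
        (r * (-Real.sin θ), r * Real.cos θ, c * r ^ m * (-Real.sin (m * θ) * m)) -
      dot3 (Real.cos θ, Real.sin θ, c * (m * r ^ (m - 1)) * Real.cos (m * θ))
        (r * (-Real.sin θ), r * Real.cos θ, c * r ^ m * (-Real.sin (m * θ) * m)) ^ 2)
      = -(c ^ 2 * m ^ 2 * (m - 1) ^ 2 * r ^ (2 * m - 4)) /
        (1 + c ^ 2 * m ^ 2 * r ^ (2 * m - 2)) ^ 2 := by
  have hu : r ^ (m - 1) = r ^ (m - 2) * r := by
    conv_lhs => rw [show m - 1 = m - 2 + 1 by ring]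
    rw [Real.rpow_add_one hr.ne']
  have hw : r ^ m = r ^ (m - 2) * r * r := by
    conv_lhs => rw [show m = m - 2 + 1 + 1 by ring]
    rw [Real.rpow_add_one hr.ne', Real.rpow_add_one hr.ne']
  have h24 : r ^ (2 * m - 4) = r ^ (m - 2) * r ^ (m - 2) := by
    conv_lhs => rw [show 2 * m - 4 = (m - 2) + (m - 2) by ring]
    rw [Real.rpow_add hr]
  have h22 : r ^ (2 * m - 2) = (r ^ (m - 2) * r) * (r ^ (m - 2) * r) := by
    conv_lhs => rw [show 2 * m - 2 = (m - 2 + 1) + (m - 2 + 1) by ring]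
    rw [Real.rpow_add hr, Real.rpow_add_one hr.ne']
  rw [hu, hw, h24, h22]
  rw [heg c m r (r ^ (m - 2)) (Real.cos θ) (Real.sin θ) (Real.cos (m * θ)) (Real.sin (m * θ)) hr
      (Real.cos_sq_add_sin_sq θ) (Real.cos_sq_add_sin_sq (m * θ)),
    hEG c m r (r ^ (m - 2)) (Real.cos θ) (Real.sin θ) (Real.cos (m * θ)) (Real.sin (m * θ))
      (Real.cos_sq_add_sin_sq θ) (Real.cos_sq_add_sin_sq (m * θ))]
  have hv : (0:ℝ) < r ^ (m - 2) := Real.rpow_pos_of_pos hr _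
  rw [div_div, div_eq_div_iff (by positivity) (by positivity)]
  ring

/-- For `m ∉ {0,1}` and `c ≠ 0`, the Gaussian curvature of
`x_{m,c}(r,θ) = (r cos θ, r sin θ, c r^m cos mθ)` is
`K = − c² m² (m−1)² r^{2m−4} / (1 + c² m² r^{2m−2})²`; in particular `K` depends
only on `r`, i.e. `x_{m,c}` has concentric `K`-contours w.r.t. the `xy`-plane. -/
theorem stmt_3 (m c : ℝ) (hm0 : m ≠ 0) (hm1 : m ≠ 1) (hc : c ≠ 0) :
    let x : ℝ → ℝ → ℝ × ℝ × ℝ :=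
      fun s t => (s * Real.cos t, s * Real.sin t, c * s ^ m * Real.cos (m * t))
    let K : ℝ → ℝ → ℝ := fun s t =>
      let xr := deriv (fun s' => x s' t) s
      let xθ := deriv (fun t' => x s t') t
      let xrr := deriv (fun s' => deriv (fun s'' => x s'' t) s') s
      let xrθ := deriv (fun t' => deriv (fun s' => x s' t') s) t
      let xθθ := deriv (fun t' => deriv (fun t'' => x s t'') t') t
      let n := (norm3 (cross3 xr xθ))⁻¹ • cross3 xr xθ
      let E := dot3 xr xr
      let Ft := dot3 xr xθ
      let G := dot3 xθ xθ
      let e := dot3 xrr n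
      let f := dot3 xrθ n
      let g := dot3 xθθ n
      (e * g - f ^ 2) / (E * G - Ft ^ 2)
    (∀ r θ : ℝ, 0 < r →
      K r θ = -(c ^ 2 * m ^ 2 * (m - 1) ^ 2 * r ^ (2 * m - 4)) /
        (1 + c ^ 2 * m ^ 2 * r ^ (2 * m - 2)) ^ 2) ∧
    (∀ r θ₁ θ₂ : ℝ, 0 < r → K r θ₁ = K r θ₂) := by
  intro x K
  have hK : ∀ r θ : ℝ, 0 < r →
      K r θ = -(c ^ 2 * m ^ 2 * (m - 1) ^ 2 * r ^ (2 * m - 4)) /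
        (1 + c ^ 2 * m ^ 2 * r ^ (2 * m - 2)) ^ 2 := by
    intro r θ hr
    show (let xr := deriv (fun s' => x s' θ) r
      let xθ := deriv (fun t' => x r t') θ
      let xrr := deriv (fun s' => deriv (fun s'' => x s'' θ) s') r
      let xrθ := deriv (fun t' => deriv (fun s' => x s' t') r) θ
      let xθθ := deriv (fun t' => deriv (fun t'' => x r t'') t') θ
      let n := (norm3 (cross3 xr xθ))⁻¹ • cross3 xr xθ
      let E := dot3 xr xr
      let Ft := dot3 xr xθ
      let G := dot3 xθ xθ
      let e := dot3 xrr n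
      let f := dot3 xrθ n
      let g := dot3 xθθ n
      (e * g - f ^ 2) / (E * G - Ft ^ 2)) = _
    simp only [x]
    simp only [d_r c m θ hr, d_t c m r θ, d_rr c m θ hr, d_rt c m hr θ, d_tt c m r θ]
    exact key m c r θ hr
  exact ⟨hK, fun r θ₁ θ₂ hr => by rw [hK r θ₁ hr, hK r θ₂ hr]⟩
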